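/- Let g be the 6-dimensional nilpotent Lie algebra determined by a (1,0)-basis ω¹,ω²,ω³ with dω¹ = 0, dω² = ω¹∧conj(ω¹), dω³ = ω¹∧ω² + B·ω¹∧conj(ω²) + c·ω²∧conj(ω¹), where B ∈ ℂ, c ≥ 0 real, and g is 3-step nilpotent. Then the center of g is 3-dimensional if and only if |B| = 1, B ≠ 1 and c = 0. -/

import Mathlib

open Complex

/-- product of submodules is equivalent to product of subtypes -/
def stmt5SubProdEquiv {R M N : Type*} [Ring R] [AddCommGroup M] [AddCommGroup N]
    [Module R M] [Module R N] (p : Submodule R M) (q : Submodule R N) :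
    (p.prod q) ≃ₗ[R] p × q where
  toFun x := (⟨x.1.1, x.2.1⟩, ⟨x.1.2, x.2.2⟩)
  invFun y := ⟨(y.1.1, y.2.1), ⟨y.1.2, y.2.2⟩⟩
  map_add' _ _ := rfl
  map_smul' _ _ := rfl
  left_inv _ := rfl
  right_inv _ := rfl

/-- the linear map whose kernel describes the `z₂` condition for centrality -/
def stmt5F (B : ℂ) (c : ℝ) : ℂ →ₗ[ℝ] ℂ × ℂ where
  toFun z := (z + B * (starRingEnd ℂ) z, (c : ℂ) * z)
  map_add' a b := by
    simp only [map_add, Prod.mk_add_mk, Prod.mk.injEq]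
    constructor <;> ring
  map_smul' r a := by
    simp only [Complex.real_smul, map_mul, Complex.conj_ofReal, RingHom.id_apply,
      Prod.smul_mk, smul_eq_mul, Prod.mk.injEq]
    constructor <;> ring

lemma stmt5F_rank (B : ℂ) (c : ℝ) :
    Module.finrank ℝ (LinearMap.ker (stmt5F B c)) = 1 ↔ (‖B‖ = 1 ∧ c = 0) := by
  have hmem : ∀ z : ℂ, z ∈ LinearMap.ker (stmt5F B c) ↔
      (z + B * (starRingEnd ℂ) z = 0 ∧ (c : ℂ) * z = 0) := by
    intro z
    rw [LinearMap.mem_ker]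
    exact Prod.ext_iff
  by_cases hB : ‖B‖ = 1 ∧ c = 0
  · obtain ⟨hB1, rfl⟩ := hB
    obtain ⟨b, hb⟩ := IsAlgClosed.exists_pow_nat_eq B (n := 2) (by norm_num)
    have hbabs : ‖b‖ = 1 := by
      have : ‖b‖ ^ 2 = 1 := by rw [← norm_pow, hb, hB1]
      nlinarith [norm_nonneg b]
    have hbb : b * (starRingEnd ℂ) b = 1 := by
      rw [Complex.mul_conj, Complex.normSq_eq_norm_sq, hbabs]; norm_num
    have hbne : Complex.I * b ≠ 0 := by
      intro h
      rcases mul_eq_zero.mp h with h | h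
      · exact Complex.I_ne_zero h
      · rw [h, norm_zero] at hbabs; norm_num at hbabs
    have hker : LinearMap.ker (stmt5F B 0) = Submodule.span ℝ {Complex.I * b} := by
      ext z
      rw [hmem, Submodule.mem_span_singleton]
      constructor
      · rintro ⟨h1, -⟩
        refine ⟨(z * (starRingEnd ℂ) b).im, ?_⟩
        rw [← hb] at h1
        have hw : z * (starRingEnd ℂ) b + (starRingEnd ℂ) z * b = 0 := by
          linear_combination (starRingEnd ℂ) b * h1 - (starRingEnd ℂ) z * b * hbb
        have hwc : z * (starRingEnd ℂ) b + (starRingEnd ℂ) (z * (starRingEnd ℂ) b) = 0 := by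
          rw [map_mul, Complex.conj_conj]
          exact hw
        have hre : (z * (starRingEnd ℂ) b).re = 0 := by
          have h2 := (Complex.add_conj (z * (starRingEnd ℂ) b)).symm.trans hwc
          have h3 : 2 * (z * (starRingEnd ℂ) b).re = 0 := by exact_mod_cast h2
          linarith
        have him : ((z * (starRingEnd ℂ) b).im : ℂ) * Complex.I = z * (starRingEnd ℂ) b := by
          simpa [hre] using Complex.re_add_im (z * (starRingEnd ℂ) b)
        rw [Complex.real_smul]
        linear_combination b * him + z * hbb
      · rintro ⟨r, rfl⟩
        rw [Complex.real_smul]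
        constructor
        · rw [← hb]
          simp only [map_mul, Complex.conj_I, Complex.conj_ofReal]
          ring_nf
          linear_combination (-(r:ℂ) * Complex.I * b) * hbb
        · simp
    rw [hker]
    simp [finrank_span_singleton hbne, hB1]
  · have hker : LinearMap.ker (stmt5F B c) = ⊥ := by
      rw [Submodule.eq_bot_iff]
      intro z hz
      rw [hmem] at hz
      obtain ⟨h1, h2⟩ := hz
      by_cases hc : c = 0
      · -- then Complex.abs B ≠ 1
        have hBne : ‖B‖ ≠ 1 := fun h => hB ⟨h, hc⟩
        have hcc : (starRingEnd ℂ) z + (starRingEnd ℂ) B * z = 0 := by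
          have := congrArg (starRingEnd ℂ) h1
          simpa [map_add, map_mul] using this
        have key : (1 - (Complex.normSq B : ℂ)) * z = 0 := by
          have hBB : B * (starRingEnd ℂ) B = (Complex.normSq B : ℂ) := Complex.mul_conj B
          linear_combination h1 - B * hcc + z * hBB
        have h5 : (1 - (Complex.normSq B : ℂ)) ≠ 0 := by
          intro h
          apply hBne
          have : (Complex.normSq B : ℂ) = 1 := by linear_combination -h
          have h6 : Complex.normSq B = 1 := by exact_mod_cast this
          have := Complex.normSq_eq_norm_sq B
          nlinarith [norm_nonneg B]
        exact (mul_eq_zero.mp key).elim (fun h => absurd h h5) id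
      · have : (c : ℂ) ≠ 0 := by exact_mod_cast hc
        exact (mul_eq_zero.mp h2).elim (fun h => absurd h this) id
    rw [hker]
    simp only [finrank_bot]
    constructor
    · intro h; omega
    · intro h; exact absurd h hB

/-- Proposition 2.16 (first part): for the 3-step nilpotent Lie algebra with
complex structure equations `dω¹ = 0`, `dω² = ω¹∧ω̄¹`,
`dω³ = ω¹∧ω² + B ω¹∧ω̄² + c ω²∧ω̄¹` (`B ∈ ℂ`, `c ≥ 0`), the center is
3-dimensional iff `|B| = 1`, `B ≠ 1` and `c = 0`. -/
theorem stmt5 (g : Type) [LieRing g] [LieAlgebra ℝ g]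
    (J : g →ₗ[ℝ] g) (hJ : ∀ X, J (J X) = -X)
    (ω₁ ω₂ ω₃ : g →ₗ[ℝ] ℂ)
    (h1 : ∀ X, ω₁ (J X) = Complex.I * ω₁ X)
    (h2 : ∀ X, ω₂ (J X) = Complex.I * ω₂ X)
    (h3 : ∀ X, ω₃ (J X) = Complex.I * ω₃ X)
    (hcoord : Function.Bijective (fun X : g => (ω₁ X, ω₂ X, ω₃ X)))
    (B : ℂ) (c : ℝ) (hc : 0 ≤ c)
    (hd1 : ∀ X Y : g, ω₁ ⁅X, Y⁆ = 0)
    (hd2 : ∀ X Y : g, -ω₂ ⁅X, Y⁆ =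
      ω₁ X * (starRingEnd ℂ) (ω₁ Y) - ω₁ Y * (starRingEnd ℂ) (ω₁ X))
    (hd3 : ∀ X Y : g, -ω₃ ⁅X, Y⁆ =
      (ω₁ X * ω₂ Y - ω₁ Y * ω₂ X)
        + B * (ω₁ X * (starRingEnd ℂ) (ω₂ Y) - ω₁ Y * (starRingEnd ℂ) (ω₂ X))
        + (c : ℂ) * (ω₂ X * (starRingEnd ℂ) (ω₁ Y) - ω₂ Y * (starRingEnd ℂ) (ω₁ X)))
    (h3step : LieModule.lowerCentralSeries ℝ g g 3 = ⊥ ∧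
      LieModule.lowerCentralSeries ℝ g g 2 ≠ ⊥) :
    Module.finrank ℝ ↥(LieAlgebra.center ℝ g) = 3 ↔
      (‖B‖ = 1 ∧ B ≠ 1 ∧ c = 0) := by
  classical
  set Φ : g →ₗ[ℝ] ℂ × ℂ × ℂ := ω₁.prod (ω₂.prod ω₃) with hΦdef
  have hbij : Function.Bijective Φ := hcoord
  have hinj : ∀ a : g, ω₁ a = 0 → ω₂ a = 0 → ω₃ a = 0 → a = 0 := by
    intro a ha1 ha2 ha3
    apply hbij.1
    show (ω₁ a, ω₂ a, ω₃ a) = (ω₁ 0, ω₂ 0, ω₃ 0)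
    simp [ha1, ha2, ha3]
  -- h3step excludes B = 1 ∧ c = 0
  have hstep : ¬(B = 1 ∧ c = 0) := by
    rintro ⟨rfl, rfl⟩
    apply h3step.2
    have key : ∀ x y z : g, ⁅x, ⁅y, z⁆⁆ = 0 := by
      intro x y z
      have hm1 : ω₁ ⁅y, z⁆ = 0 := hd1 y z
      apply hinj
      · exact hd1 _ _
      · have h := hd2 x ⁅y, z⁆
        rw [hm1] at h
        simpa using (neg_eq_zero.mp (by rw [h]; simp))
      · have h := hd3 x ⁅y, z⁆
        have hm2 : ω₂ ⁅y, z⁆ = ω₁ z * (starRingEnd ℂ) (ω₁ y) - ω₁ y * (starRingEnd ℂ) (ω₁ z) := by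
          linear_combination -hd2 y z
        have hm2c : (starRingEnd ℂ) (ω₂ ⁅y, z⁆) = -(ω₂ ⁅y, z⁆) := by
          rw [hm2]
          simp only [map_sub, map_mul, Complex.conj_conj]
          ring
        rw [hm1, hm2c] at h
        apply neg_eq_zero.mp
        rw [h]
        push_cast
        ring
    have hlcs2 : LieModule.lowerCentralSeries ℝ g g 2 =
        ⁅(⊤ : LieIdeal ℝ g), ⁅(⊤ : LieIdeal ℝ g), (⊤ : LieSubmodule ℝ g g)⁆⁆ := by
      rw [show (2 : ℕ) = 1 + 1 from rfl, LieModule.lowerCentralSeries_succ,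
        show (1 : ℕ) = 0 + 1 from rfl, LieModule.lowerCentralSeries_succ,
        LieModule.lowerCentralSeries_zero]
    rw [hlcs2, LieSubmodule.lie_eq_bot_iff]
    intro x _ m hm
    rw [← LieSubmodule.mem_toSubmodule, LieSubmodule.lieIdeal_oper_eq_linear_span'] at hm
    induction hm using Submodule.span_induction with
    | mem w hw =>
      obtain ⟨y, -, z, -, rfl⟩ := hw
      exact key x y z
    | zero => simp
    | add u v hu hv hu' hv' => rw [lie_add, hu', hv', add_zero]
    | smul t u hu hu' => rw [lie_smul, hu', smul_zero]
  -- characterisation of the centre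
  have hcen : ∀ m : g, m ∈ LieAlgebra.center ℝ g ↔
      (ω₁ m = 0 ∧ (ω₂ m + B * (starRingEnd ℂ) (ω₂ m) = 0 ∧ (c : ℂ) * ω₂ m = 0)) := by
    intro m
    rw [LieModule.mem_maxTrivSubmodule]
    constructor
    · intro h
      obtain ⟨a, ha⟩ := hbij.2 (1, 0, 0)
      obtain ⟨b, hb⟩ := hbij.2 (Complex.I, 0, 0)
      have ha1 : ω₁ a = 1 := congrArg Prod.fst ha
      have ha2 : ω₂ a = 0 := congrArg (Prod.fst ∘ Prod.snd) ha
      have hb1 : ω₁ b = Complex.I := congrArg Prod.fst hb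
      have hb2 : ω₂ b = 0 := congrArg (Prod.fst ∘ Prod.snd) hb
      have e2a := hd2 a m
      rw [h a, ha1] at e2a
      simp only [map_zero, neg_zero, map_one, mul_one, one_mul] at e2a
      have e2b := hd2 b m
      rw [h b, hb1] at e2b
      simp only [map_zero, neg_zero, Complex.conj_I] at e2b
      have hz1 : ω₁ m = 0 := by
        linear_combination (1 / 2 : ℂ) * e2a + (Complex.I / 2) * e2b +
          ((ω₁ m + (starRingEnd ℂ) (ω₁ m)) / 2) * Complex.I_sq
      have e3a := hd3 a m
      rw [h a, ha1, ha2, hz1] at e3a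
      simp only [map_zero, neg_zero, map_one, mul_zero, zero_mul, one_mul, mul_one,
        sub_zero, zero_sub, add_zero, zero_add] at e3a
      have e3b := hd3 b m
      rw [h b, hb1, hb2, hz1] at e3b
      simp only [map_zero, neg_zero, Complex.conj_I, mul_zero, zero_mul, sub_zero,
        zero_sub, add_zero, zero_add] at e3b
      refine ⟨hz1, ?_, ?_⟩
      · linear_combination (-1 / 2 : ℂ) * e3a + (Complex.I / 2) * e3b +
          ((ω₂ m + B * (starRingEnd ℂ) (ω₂ m) + (c : ℂ) * ω₂ m) / 2) * Complex.I_sq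
      · linear_combination (1 / 2 : ℂ) * e3a + (Complex.I / 2) * e3b +
          ((ω₂ m + B * (starRingEnd ℂ) (ω₂ m) + (c : ℂ) * ω₂ m) / 2) * Complex.I_sq
    · rintro ⟨hz1, hz2, hz3⟩ x
      have hz1c : (starRingEnd ℂ) (ω₁ m) = 0 := by rw [hz1]; simp
      apply hinj
      · exact hd1 _ _
      · have h := hd2 x m
        rw [hz1c, hz1] at h
        apply neg_eq_zero.mp; rw [h]; ring
      · have h := hd3 x m
        rw [hz1c, hz1] at h
        apply neg_eq_zero.mp
        rw [h]
        linear_combination ω₁ x * hz2 - (starRingEnd ℂ) (ω₁ x) * hz3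
  -- rewrite the centre as a comap of an explicit submodule
  set K : Submodule ℝ ℂ := LinearMap.ker (stmt5F B c) with hK
  set S : Submodule ℝ (ℂ × ℂ × ℂ) :=
    (⊥ : Submodule ℝ ℂ).prod (K.prod (⊤ : Submodule ℝ ℂ)) with hS
  have hcomap : LieSubmodule.toSubmodule
      (LieAlgebra.center ℝ g : LieSubmodule ℝ g g) = S.comap Φ := by
    ext m
    rw [Submodule.mem_comap, LieSubmodule.mem_toSubmodule]
    have hmemS : Φ m ∈ S ↔
        (ω₁ m ∈ (⊥ : Submodule ℝ ℂ) ∧ ω₂ m ∈ K ∧ ω₃ m ∈ (⊤ : Submodule ℝ ℂ)) := by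
      rw [hS, Submodule.mem_prod, Submodule.mem_prod]
      exact Iff.rfl
    rw [hmemS, hcen m]
    simp only [Submodule.mem_bot, Submodule.mem_top, and_true]
    constructor
    · rintro ⟨u, v, w⟩
      exact ⟨u, by rw [hK, LinearMap.mem_ker]; exact Prod.ext_iff.mpr ⟨v, w⟩⟩
    · rintro ⟨u, v⟩
      rw [hK, LinearMap.mem_ker] at v
      have v' := Prod.ext_iff.mp v
      exact ⟨u, v'.1, v'.2⟩
  -- compute the rank
  have hrank : Module.finrank ℝ ↥(LieAlgebra.center ℝ g) = Module.finrank ℝ ↥K + 2 := by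
    have e1 : Module.finrank ℝ
        ↥(LieSubmodule.toSubmodule (LieAlgebra.center ℝ g : LieSubmodule ℝ g g)) =
        Module.finrank ℝ ↥(S.comap Φ) := by rw [hcomap]
    have e2 : Module.finrank ℝ ↥(S.comap Φ) = Module.finrank ℝ ↥S :=
      (LinearEquiv.ofSubmodule' (LinearEquiv.ofBijective Φ hbij) S).finrank_eq
    have e3 : Module.finrank ℝ ↥S = Module.finrank ℝ ↥K + 2 := by
      rw [hS,
        (stmt5SubProdEquiv (⊥ : Submodule ℝ ℂ) (K.prod (⊤ : Submodule ℝ ℂ))).finrank_eq,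
        Module.finrank_prod,
        (stmt5SubProdEquiv K (⊤ : Submodule ℝ ℂ)).finrank_eq,
        Module.finrank_prod, finrank_bot, finrank_top, Complex.finrank_real_complex]
      omega
    exact (e1.trans e2).trans e3
  rw [hrank, show (Module.finrank ℝ ↥K + 2 = 3 ↔ Module.finrank ℝ ↥K = 1) from by omega,
    hK, stmt5F_rank]
  constructor
  · rintro ⟨hB1, hc0⟩
    exact ⟨hB1, fun hB => hstep ⟨hB, hc0⟩, hc0⟩
  · rintro ⟨hB1, -, hc0⟩
    exact ⟨hB1, hc0⟩
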